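/- Let ε be a real number with 0 < ε < 1/2, let B = log((2ε + 1)/(4ε)), and let A = ⌈(3B + 6)/(8ε) − (B + 1)/2⌉. Then for every integer k ≥ 1 with k − ⌊2kε⌋ ≥ A, writing m = ⌊2kε⌋ (so m ≥ 1), one has log(1 + (k − m − A)/(2m)) < ∑_{j=1}^{2m−1} log(1 + (2A − 1)/(k − m − A + j)), where the sum and logarithms are over the real numbers. -/

import Mathlib

lemma pade_aux {x : ℝ} (hx : 0 ≤ x) : 2*x/(2+x) ≤ Real.log (1+x) := by
  set f : ℝ → ℝ := fun z => Real.log (1+z) - 2*z/(2+z) with hf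
  have hder : ∀ y : ℝ, 0 ≤ y → HasDerivAt f (1/(1+y) - 4/(2+y)^2) y := by
    intro y hy
    have h1 : HasDerivAt (fun z : ℝ => 1+z) 1 y := by
      simpa using (hasDerivAt_id y).const_add (1:ℝ)
    have h2 : HasDerivAt (fun z : ℝ => Real.log (1+z)) (1/(1+y)) y := by
      have := (Real.hasDerivAt_log (by linarith : (1:ℝ)+y ≠ 0)).comp y h1
      simpa [one_div, Function.comp_def] using this
    have h3 : HasDerivAt (fun z : ℝ => 2*z) 2 y := by
      simpa using (hasDerivAt_id y).const_mul (2:ℝ)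
    have h4 : HasDerivAt (fun z : ℝ => 2+z) 1 y := by
      simpa using (hasDerivAt_id y).const_add (2:ℝ)
    have h5 : HasDerivAt (fun z : ℝ => 2*z/(2+z)) ((2*(2+y) - 2*y*1)/(2+y)^2) y :=
      h3.div h4 (by linarith)
    have e : 2*(2+y) - 2*y*1 = 4 := by ring
    rw [e] at h5
    exact h2.sub h5
  have mono : MonotoneOn f (Set.Ici (0:ℝ)) := by
    apply monotoneOn_of_deriv_nonneg (convex_Ici 0)
    · exact fun y hy => ((hder y hy).differentiableAt).continuousAt.continuousWithinAt
    · intro y hy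
      rw [interior_Ici] at hy
      exact ((hder y (le_of_lt hy)).differentiableAt).differentiableWithinAt
    · intro y hy
      rw [interior_Ici] at hy
      have hy' : (0:ℝ) < y := hy
      rw [(hder y (le_of_lt hy')).deriv]
      rw [sub_nonneg, div_le_div_iff₀ (by nlinarith) (by linarith)]
      nlinarith [sq_nonneg y]
  have h0 : f 0 ≤ f x := mono Set.self_mem_Ici hx hx
  simp [hf] at h0
  linarith

lemma aux_hu (ε B a : ℝ) (h' : 3*B+6 ≤ (a+(B+1)/2)*(8*ε)) :
    3*B + 6 - 4*ε*(B+1) ≤ 8*ε*a := by nlinarith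

lemma aux_ha2 (ε B a : ℝ) (hε0 : 0 < ε) (hε1 : ε < 1/2) (hBpos : 0 < B)
    (hu : 3*B + 6 - 4*ε*(B+1) ≤ 8*ε*a) : 1 ≤ 2*ε*a := by nlinarith

lemma aux_ha1 (ε a : ℝ) (hε1 : ε < 1/2) (hε0 : 0 < ε) (ha2 : 1 ≤ 2*ε*a) : (1:ℝ) ≤ a := by
  nlinarith

lemma aux_hm1 (ε K M a : ℝ) (hε0 : 0 < ε) (hKMa : M + a ≤ K) (hM0 : 0 ≤ M)
    (ha2 : 1 ≤ 2*ε*a) : 1 ≤ 2*K*ε := by nlinarith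

lemma aux_hL (ε K M a : ℝ) (hfu : 2*K*ε < M+1) (ha2 : 1 ≤ 2*ε*a) :
    (K + M - a) * (4*ε) < (2*ε+1)*(2*M) := by nlinarith

lemma aux_pair (p q r a' : ℝ) (hp1 : 1 ≤ p) (hq1 : 1 ≤ q) (hpq : p + q = 2*r)
    (ha' : 1 ≤ a') : (r + a')^2 * (p*q) ≤ (p + a')*(q + a') * r^2 := by
  have hr : r = (p+q)/2 := by linarith
  subst hr
  nlinarith [mul_nonneg (sq_nonneg (p - q)) (show (0:ℝ) ≤ a'*(p+q) + a'^2 by nlinarith)]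

lemma aux_fin (ε B a M K : ℝ) (hε0 : 0 < ε) (hε1 : ε < 1/2) (hBpos : 0 < B)
    (hBub : 4*ε*B ≤ 1 - 2*ε) (hBlb : 1 - 2*ε ≤ B*(1+2*ε))
    (hu : 3*B + 6 - 4*ε*(B+1) ≤ 8*ε*a)
    (hKMa : M + a ≤ K) (hfu : 2*K*ε < M+1) :
    B * (2*K-1) < (2*M-1) * (4*a-2) := by
  have hR : 0 ≤ (3*(B+2)-4*ε*(B+1))*((B+1)*(1-2*ε)-1)+2*ε*(B+2)*(3-2*ε) := by
    nlinarith [mul_pos hε0 hBpos, sq_nonneg (1-2*ε), sq_nonneg B,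
      mul_nonneg hBpos.le (sub_nonneg.2 hBub), sq_nonneg (B - 2*ε),
      sq_nonneg (B*(1+2*ε)-(1-2*ε)), mul_nonneg (sub_nonneg.2 hBlb) (sub_nonneg.2 hBub)]
  have hcert1 : 0 ≤ 8*ε*a - (3*B+6-4*ε*(B+1)) := by linarith
  have hcert2 : 0 ≤ 8*ε*a + (3*B+6-4*ε*(B+1)) - (B+6) := by
    nlinarith [mul_pos (show (0:ℝ) < 1-2*ε by linarith) hBpos]
  have hq4 : 0 ≤ 4*ε*(16*ε*a^2 - 2*a*(B+6) + (3*B+6-4*ε-2*ε*B)) := by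
    nlinarith [mul_nonneg hcert1 hcert2, hR]
  have hslack : 0 ≤ M*(1-2*ε) - (2*ε*a - 1) := by
    nlinarith [mul_le_mul_of_nonneg_left hKMa (le_of_lt hε0)]
  have hs : 0 ≤ 8*ε*a - 4*ε - B := by
    nlinarith [mul_pos (show (0:ℝ) < 1-2*ε by linarith) hBpos]
  have hG1 : 0 ≤ (1-2*ε) * (ε*((2*M-1)*(4*a-2)) - B*(M+1) + B*ε) := by
    nlinarith [mul_nonneg hs hslack, hq4]
  have hG : 0 ≤ ε*((2*M-1)*(4*a-2)) - B*(M+1) + B*ε := by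
    by_contra hcon
    push_neg at hcon
    nlinarith [mul_pos (show (0:ℝ) < 1-2*ε by linarith) (neg_pos.2 hcon), hG1]
  have hBK : B*(2*K*ε) < B*(M+1) := mul_lt_mul_of_pos_left hfu hBpos
  have hmul : ε*(B*(2*K-1)) < ε*((2*M-1)*(4*a-2)) := by nlinarith [hBK, hG]
  exact lt_of_mul_lt_mul_left hmul (le_of_lt hε0)

set_option maxHeartbeats 1000000 in
theorem stmt_13 (ε : ℝ) (hε0 : 0 < ε) (hε1 : ε < 1 / 2)
    (B : ℝ) (hB : B = Real.log ((2 * ε + 1) / (4 * ε)))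
    (A : ℤ) (hA : A = ⌈(3 * B + 6) / (8 * ε) - (B + 1) / 2⌉)
    (k : ℕ) (hk : 1 ≤ k) (m : ℤ) (hm : m = ⌊2 * (k : ℝ) * ε⌋)
    (hkA : A ≤ (k : ℤ) - m) :
    Real.log (1 + ((k : ℝ) - (m : ℝ) - (A : ℝ)) / (2 * (m : ℝ))) <
      ∑ j ∈ Finset.Icc (1 : ℤ) (2 * m - 1),
        Real.log (1 + (2 * (A : ℝ) - 1) / ((k : ℝ) - (m : ℝ) - (A : ℝ) + (j : ℝ))) := by
  set K : ℝ := (k : ℝ) with hK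
  set M : ℝ := (m : ℝ) with hM
  set a : ℝ := (A : ℝ) with ha
  -- basic facts
  have hK1 : (1:ℝ) ≤ K := by rw [hK]; exact_mod_cast hk
  have hKMa : M + a ≤ K := by
    rw [hK, hM, ha]
    have : (A:ℝ) ≤ ((k:ℤ):ℝ) - (m:ℝ) := by exact_mod_cast hkA
    push_cast at this ⊢; linarith
  have hfl : M ≤ 2 * K * ε := by rw [hM, hm]; exact Int.floor_le _
  have hfu : 2 * K * ε < M + 1 := by
    rw [hM, hm]; exact Int.lt_floor_add_one _
  have hAc : (3 * B + 6) / (8 * ε) - (B + 1) / 2 ≤ a := by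
    rw [ha, hA]; exact Int.le_ceil _
  have hu : 3*B + 6 - 4*ε*(B+1) ≤ 8*ε*a := by
    have h8 : (0:ℝ) < 8*ε := by linarith
    have h' : (3*B+6)/(8*ε) ≤ a + (B+1)/2 := by linarith
    rw [div_le_iff₀ h8] at h'
    exact aux_hu ε B a h'
  -- log bounds on B
  have hx01 : (1:ℝ) < (2*ε+1)/(4*ε) := by
    rw [lt_div_iff₀ (by linarith)]; linarith
  have hBpos : 0 < B := by rw [hB]; exact Real.log_pos hx01
  have hBub : 4*ε*B ≤ 1 - 2*ε := by
    have h := Real.log_le_sub_one_of_pos (show (0:ℝ) < (2*ε+1)/(4*ε) by linarith)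
    rw [← hB] at h
    have he : 4*ε*((2*ε+1)/(4*ε)) = 2*ε+1 := by field_simp
    nlinarith [mul_le_mul_of_nonneg_left h (by linarith : (0:ℝ) ≤ 4*ε), he]
  have hBlb : 1 - 2*ε ≤ B*(1+2*ε) := by
    have h := Real.log_le_sub_one_of_pos (show (0:ℝ) < ((2*ε+1)/(4*ε))⁻¹ by positivity)
    rw [Real.log_inv, ← hB, inv_div] at h
    have he : (4*ε/(2*ε+1))*(2*ε+1) = 4*ε := by field_simp
    nlinarith [mul_le_mul_of_nonneg_left h (by linarith : (0:ℝ) ≤ 2*ε+1), he]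
  have ha2 : 1 ≤ 2*ε*a := aux_ha2 ε B a hε0 hε1 hBpos hu
  have ha1 : (1:ℝ) ≤ a := aux_ha1 ε a hε1 hε0 ha2
  have hm0 : (0:ℤ) ≤ m := by
    rw [hm]; apply Int.floor_nonneg.2; positivity
  have hM0 : (0:ℝ) ≤ M := by rw [hM]; exact_mod_cast hm0
  have hm1 : (1:ℤ) ≤ m := by
    rw [hm]; apply Int.le_floor.2; push_cast
    exact aux_hm1 ε K M a hε0 hKMa hM0 ha2
  have hM1 : (1:ℝ) ≤ M := by rw [hM]; exact_mod_cast hm1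
  have hn0 : 0 ≤ K - M - a := by linarith
  have hKa : M ≤ K - a := by linarith
  -- Step 1: LHS < B
  have hL : Real.log (1 + (K - M - a) / (2*M)) < B := by
    rw [hB]
    have hpos : 0 < 1 + (K - M - a) / (2*M) := by
      have := div_nonneg hn0 (by linarith : (0:ℝ) ≤ 2*M)
      linarith
    apply Real.log_lt_log hpos
    have he : 1 + (K - M - a) / (2*M) = (K + M - a)/(2*M) := by
      field_simp; ring
    rw [he, div_lt_div_iff₀ (by linarith) (by linarith)]
    exact aux_hL ε K M a hfu ha2
  -- the summand
  set f : ℤ → ℝ := fun j => Real.log (1 + (2*a - 1) / (K - M - a + (j:ℝ))) with hfdef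
  set c : ℝ := Real.log (1 + (2*a-1)/(K - a)) with hcdef
  set I : Finset ℤ := Finset.Icc (1:ℤ) (2*m-1) with hI
  -- pairing
  have hpair : ∀ j ∈ I, 2*c ≤ f j + f (2*m - j) := by
    intro j hj
    rw [hI, Finset.mem_Icc] at hj
    have hj1 : (1:ℝ) ≤ (j:ℝ) := by exact_mod_cast hj.1
    have hj2 : (j:ℝ) ≤ 2*M - 1 := by
      have h2 : ((j:ℤ):ℝ) ≤ ((2*m-1 : ℤ):ℝ) := by exact_mod_cast hj.2
      push_cast at h2; rw [← hM] at h2; linarith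
    have hq' : ((2*m - j : ℤ):ℝ) = 2*M - (j:ℝ) := by push_cast; rw [← hM]
    have hfq : f (2*m - j) = Real.log (1 + (2*a-1)/(K - M - a + (2*M - (j:ℝ)))) := by
      simp only [hfdef]; rw [hq']
    set p : ℝ := K - M - a + (j:ℝ) with hp
    set q : ℝ := K - M - a + (2*M - (j:ℝ)) with hqd
    set r : ℝ := K - a with hr
    have hp1 : 1 ≤ p := by rw [hp]; linarith
    have hq1 : 1 ≤ q := by rw [hqd]; linarith
    have hpq : p + q = 2*r := by rw [hp, hqd, hr]; ring
    have ha' : (1:ℝ) ≤ 2*a - 1 := by linarith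
    have hr1 : (1:ℝ) ≤ r := by rw [hr]; linarith
    have e1 : 1 + (2*a-1)/p = (p + (2*a-1))/p := by field_simp
    have e2 : 1 + (2*a-1)/q = (q + (2*a-1))/q := by field_simp
    have e3 : 1 + (2*a-1)/r = (r + (2*a-1))/r := by field_simp
    have hfj : f j = Real.log ((p + (2*a-1))/p) := by simp only [hfdef]; rw [← hp, e1]
    have hfq2 : f (2*m - j) = Real.log ((q + (2*a-1))/q) := by rw [hfq, e2]
    have hc2 : c = Real.log ((r + (2*a-1))/r) := by rw [hcdef, e3]
    rw [hfj, hfq2, hc2]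
    rw [← Real.log_mul (by positivity) (by positivity)]
    have h2log : 2 * Real.log ((r + (2*a-1))/r) = Real.log (((r + (2*a-1))/r)^2) := by
      rw [Real.log_pow]; push_cast; ring
    rw [h2log]
    apply Real.log_le_log (by positivity)
    rw [div_pow, div_mul_div_comm, div_le_div_iff₀ (by positivity) (by positivity)]
    exact aux_pair p q r (2*a-1) hp1 hq1 hpq ha'
  -- reindexing
  have hre : ∑ j ∈ I, f (2*m - j) = ∑ j ∈ I, f j := by
    refine Finset.sum_nbij' (fun j => 2*m - j) (fun j => 2*m - j) ?_ ?_ ?_ ?_ ?_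
    · intro x hx; simp only [hI, Finset.mem_Icc] at *; omega
    · intro x hx; simp only [hI, Finset.mem_Icc] at *; omega
    · intro x hx; omega
    · intro x hx; omega
    · intro x hx; rfl
  have hcard : (I.card : ℝ) = 2*M - 1 := by
    rw [hI, Int.card_Icc]
    have e : 2*m - 1 + 1 - 1 = 2*m - 1 := by ring
    rw [e]
    have h0 : (0:ℤ) ≤ 2*m - 1 := by omega
    rw [show ((Int.toNat (2*m-1) : ℕ) : ℝ) = ((2*m - 1 : ℤ) : ℝ) by
      exact_mod_cast congrArg Int.cast (Int.toNat_of_nonneg h0)]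
    push_cast; rw [← hM]
  have hsum : (2*M - 1) * c ≤ ∑ j ∈ I, f j := by
    have h1 : ∑ _j ∈ I, 2*c ≤ ∑ j ∈ I, (f j + f (2*m - j)) := Finset.sum_le_sum hpair
    rw [Finset.sum_add_distrib, hre, Finset.sum_const, nsmul_eq_mul, hcard] at h1
    linarith
  -- Pade step
  have hc : (4*a - 2)/(2*K - 1) ≤ c := by
    have hxn : 0 ≤ (2*a-1)/(K-a) := div_nonneg (by linarith) (by linarith)
    have hpd := pade_aux hxn
    have he : 2*((2*a-1)/(K-a))/(2 + (2*a-1)/(K-a)) = (4*a-2)/(2*K-1) := by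
      have h1 : K - a ≠ 0 := by linarith
      have h2 : 2*K - 1 ≠ 0 := by nlinarith
      have h3 : 2 + (2*a-1)/(K-a) ≠ 0 := by positivity
      have hden : 2 + (2*a-1)/(K-a) = (2*K-1)/(K-a) := by
        field_simp
        ring
      rw [hden, div_div_eq_mul_div]
      rw [show 2*((2*a-1)/(K-a))*(K-a) = 4*a - 2 from by field_simp; ring]
    rw [hcdef]
    calc (4*a-2)/(2*K-1) = 2*((2*a-1)/(K-a))/(2 + (2*a-1)/(K-a)) := he.symm
      _ ≤ Real.log (1 + (2*a-1)/(K-a)) := hpd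
  -- final arithmetic
  have hfin : B < (2*M - 1) * ((4*a-2)/(2*K-1)) := by
    rw [mul_div_assoc', lt_div_iff₀ (by linarith : (0:ℝ) < 2*K-1)]
    exact aux_fin ε B a M K hε0 hε1 hBpos hBub hBlb hu hKMa hfu
  calc Real.log (1 + (K - M - a) / (2*M)) < B := hL
    _ < (2*M-1) * ((4*a-2)/(2*K-1)) := hfin
    _ ≤ (2*M-1) * c := by
        apply mul_le_mul_of_nonneg_left hc (by linarith : (0:ℝ) ≤ 2*M-1)
    _ ≤ ∑ j ∈ I, f j := hsum
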